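/- Let k > ℓ ≥ t+2 and n ≥ max{2·L(k,t), t+1+(k-t)(ℓ-t)} where L(k,t) = (t+1)+(k-t+1)·log₂((t+1)(k-t+1)). Define r₁(n,k,ℓ,t) = (Σ_{j=1}^{ℓ-t} (-1)^{j-1}·C(ℓ-t,j)·S(n-t-j, k-t-j))·(S(n-t, ℓ-t) + t). Then r₁(n,k,ℓ,t) > r₁(n,ℓ,k,t). -/

import Mathlib

/-- Stirling number of the second kind. -/
def stirling : ℕ → ℕ → ℕ
  | 0, 0 => 1
  | 0, _ + 1 => 0
  | _ + 1, 0 => 0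
  | n + 1, k + 1 => stirling n k + (k + 1) * stirling n (k + 1)

/-- `L(k,t) = (t+1) + (k-t+1)·log₂((t+1)(k-t+1))`. -/
noncomputable def Lfun (k t : ℕ) : ℝ :=
  ((t : ℝ) + 1) + ((k : ℝ) - t + 1) * Real.logb 2 (((t : ℝ) + 1) * ((k : ℝ) - t + 1))

/-- `r₁(n,k,ℓ,t) = (Σ_{j=1}^{ℓ-t} (-1)^{j-1}·C(ℓ-t,j)·S(n-t-j,k-t-j))·(S(n-t,ℓ-t)+t)`. -/
def r1 (n k l t : ℕ) : ℤ :=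
  (∑ j ∈ Finset.Icc 1 (l - t),
      (-1 : ℤ) ^ (j - 1) * Nat.choose (l - t) j * stirling (n - t - j) (k - t - j)) *
    ((stirling (n - t) (l - t) : ℤ) + t)

/-! ### Auxiliary lemmas -/

lemma stirling_zero' (M : ℕ) (h : 1 ≤ M) : stirling M 0 = 0 := by
  match M, h with
  | M + 1, _ => rfl

lemma stirling_succ' (M j : ℕ) :
    stirling (M + 1) (j + 1) = stirling M j + (j + 1) * stirling M (j + 1) := rfl

/-- key identity: `c^M = ∑_j C(c,j)·j!·S(M,j)` -/
lemma pow_eq_sum_stirling (c : ℕ) : ∀ M : ℕ,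
    c ^ M = ∑ j ∈ Finset.range (c + 1), c.choose j * j.factorial * stirling M j := by
  intro M
  induction M with
  | zero =>
    rw [Finset.sum_eq_single_of_mem 0 (by simp)]
    · simp [stirling]
    · rintro ⟨⟩ - h
      · exact absurd rfl h
      · simp [stirling]
  | succ M ih =>
    rw [Finset.sum_range_succ']
    have h0 : c.choose 0 * Nat.factorial 0 * stirling (M + 1) 0 = 0 := by simp [stirling]
    rw [h0, add_zero]
    have hterm : ∀ j ∈ Finset.range c,
        c.choose (j+1) * (j+1).factorial * stirling (M+1) (j+1)
        = (c - j) * (c.choose j * j.factorial * stirling M j)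
          + (c.choose (j+1) * (j+1).factorial * (j+1) * stirling M (j+1)) := by
      intro j hj
      rw [stirling_succ']
      have h1 : c.choose (j+1) * (j+1).factorial = (c - j) * (c.choose j * j.factorial) := by
        have h2 : c.choose (j+1) * (j+1) = c.choose j * (c - j) := Nat.choose_succ_right_eq c j
        calc c.choose (j+1) * (j+1).factorial = (c.choose (j+1) * (j+1)) * j.factorial := by
              rw [Nat.factorial_succ]; ring
          _ = (c.choose j * (c - j)) * j.factorial := by rw [h2]
          _ = (c - j) * (c.choose j * j.factorial) := by ring
      rw [mul_add, h1]
      ring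
    rw [Finset.sum_congr rfl hterm, Finset.sum_add_distrib]
    have hS2 : (∑ j ∈ Finset.range c,
        c.choose (j+1) * (j+1).factorial * (j+1) * stirling M (j+1))
        = ∑ j ∈ Finset.range (c+1), c.choose j * j.factorial * j * stirling M j := by
      rw [Finset.sum_range_succ']
      simp
    have hS1 : (∑ j ∈ Finset.range c, (c - j) * (c.choose j * j.factorial * stirling M j))
        = ∑ j ∈ Finset.range (c+1), (c - j) * (c.choose j * j.factorial * stirling M j) := by
      rw [Finset.sum_range_succ]
      simp
    rw [hS1, hS2, ← Finset.sum_add_distrib]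
    have : ∀ j ∈ Finset.range (c+1),
        (c - j) * (c.choose j * j.factorial * stirling M j)
          + c.choose j * j.factorial * j * stirling M j
        = c * (c.choose j * j.factorial * stirling M j) := by
      intro j hj
      have hjc : j ≤ c := Nat.lt_succ_iff.mp (Finset.mem_range.mp hj)
      have hcj : c - j + j = c := Nat.sub_add_cancel hjc
      calc (c - j) * (c.choose j * j.factorial * stirling M j)
            + c.choose j * j.factorial * j * stirling M j
          = ((c - j) + j) * (c.choose j * j.factorial * stirling M j) := by ring
        _ = c * (c.choose j * j.factorial * stirling M j) := by rw [hcj]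
    rw [Finset.sum_congr rfl this, ← Finset.mul_sum, ← ih]
    ring

/-- upper bound for Stirling numbers -/
lemma stirling_upper (M c : ℕ) : c.factorial * stirling M c ≤ c ^ M := by
  rw [pow_eq_sum_stirling]
  have h : c.choose c * c.factorial * stirling M c = c.factorial * stirling M c := by
    simp [Nat.choose_self]
  calc c.factorial * stirling M c = c.choose c * c.factorial * stirling M c := h.symm
    _ ≤ _ := Finset.single_le_sum (f := fun j => c.choose j * j.factorial * stirling M j)
        (fun i _ => Nat.zero_le _) (by simp)

lemma descFact_cmp (m d : ℕ) (hdm : d ≤ m) : ∀ i, i ≤ d →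
    m ^ i * d.descFactorial i ≤ d ^ i * m.descFactorial i := by
  intro i
  induction i with
  | zero => simp
  | succ i ih =>
    intro hi
    have hid : i ≤ d := Nat.le_of_succ_le hi
    rw [Nat.descFactorial_succ, Nat.descFactorial_succ]
    have key : m * (d - i) ≤ d * (m - i) := by
      have h1 : i ≤ m := le_trans hid hdm
      zify [hid, h1]
      nlinarith [Nat.mul_le_mul_left i hdm]
    calc m ^ (i+1) * ((d - i) * d.descFactorial i)
        = (m * (d - i)) * (m ^ i * d.descFactorial i) := by ring
      _ ≤ (d * (m - i)) * (d ^ i * m.descFactorial i) :=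
          Nat.mul_le_mul key (ih hid)
      _ = d ^ (i+1) * ((m - i) * m.descFactorial i) := by ring

lemma choose_cmp (m d i : ℕ) (hdm : d ≤ m) (hi : i ≤ d) :
    m ^ i * d.choose i ≤ d ^ i * m.choose i := by
  have h := descFact_cmp m d hdm i hi
  rw [Nat.descFactorial_eq_factorial_mul_choose, Nat.descFactorial_eq_factorial_mul_choose] at h
  have hf : 0 < i.factorial := Nat.factorial_pos i
  have h2 : (m ^ i * d.choose i) * i.factorial ≤ (d ^ i * m.choose i) * i.factorial := by
    calc (m ^ i * d.choose i) * i.factorial = m ^ i * (i.factorial * d.choose i) := by ring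
      _ ≤ d ^ i * (i.factorial * m.choose i) := h
      _ = (d ^ i * m.choose i) * i.factorial := by ring
  exact Nat.le_of_mul_le_mul_right h2 hf

/-- `(m+d)^m ≥ 2^d·m^m` for `d ≤ m` -/
lemma two_pow_mul_le (m d : ℕ) (hdm : d ≤ m) : 2 ^ d * m ^ m ≤ (m + d) ^ m := by
  have hexp : (m + d) ^ m = ∑ i ∈ Finset.range (m + 1), d ^ i * m ^ (m - i) * m.choose i := by
    rw [show m + d = d + m by ring, add_pow]
    push_cast
    ring
  rw [hexp]
  have hsub : Finset.range (d + 1) ⊆ Finset.range (m + 1) := by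
    intro x hx; simp at hx ⊢; omega
  calc 2 ^ d * m ^ m = ∑ i ∈ Finset.range (d + 1), d.choose i * m ^ m := by
        rw [← Finset.sum_mul, Nat.sum_range_choose]
    _ ≤ ∑ i ∈ Finset.range (d + 1), d ^ i * m ^ (m - i) * m.choose i := by
        apply Finset.sum_le_sum
        intro i hi
        have hid : i ≤ d := Nat.lt_succ_iff.mp (Finset.mem_range.mp hi)
        have him : i ≤ m := le_trans hid hdm
        have h1 : m ^ m = m ^ i * m ^ (m - i) := by
          rw [← pow_add, Nat.add_sub_cancel' him]
        calc d.choose i * m ^ m = (m ^ i * d.choose i) * m ^ (m - i) := by rw [h1]; ring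
          _ ≤ (d ^ i * m.choose i) * m ^ (m - i) :=
              Nat.mul_le_mul_right _ (choose_cmp m d i hdm hid)
          _ = d ^ i * m ^ (m - i) * m.choose i := by ring
    _ ≤ _ := Finset.sum_le_sum_of_subset hsub

lemma pow_div_bound (x y m M : ℕ) (hm : 1 ≤ m) (hyx : y ≤ x) (h2 : 2 * y ^ m ≤ x ^ m) :
    2 ^ (M / m) * y ^ M ≤ x ^ M := by
  have hM : M = m * (M / m) + M % m := (Nat.div_add_mod M m).symm
  set q := M / m with hq
  set r := M % m with hr
  calc 2 ^ q * y ^ M = (2 * y ^ m) ^ q * y ^ r := by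
        rw [hM, pow_add, pow_mul, mul_pow]; ring
    _ ≤ (x ^ m) ^ q * x ^ r :=
        Nat.mul_le_mul (Nat.pow_le_pow_left h2 q) (Nat.pow_le_pow_left hyx r)
    _ = x ^ M := by rw [hM, pow_add, pow_mul]

lemma log_div_bound (K s M : ℕ) (hs : 1 ≤ s) (h : (2 * K) ^ s ≤ 2 ^ M) :
    K ≤ 2 ^ (M / s) := by
  have h1 : 2 ^ M < 2 ^ (s * (M / s) + s) := by
    apply Nat.pow_lt_pow_right (by norm_num)
    have := Nat.div_add_mod M s
    have := Nat.mod_lt M (show 0 < s from hs)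
    omega
  have h2 : (2 * K) ^ s < (2 ^ (M / s + 1)) ^ s := by
    calc (2 * K) ^ s ≤ 2 ^ M := h
      _ < 2 ^ (s * (M / s) + s) := h1
      _ = (2 ^ (M / s + 1)) ^ s := by rw [← pow_mul]; ring_nf
  have h3 : 2 * K < 2 ^ (M / s + 1) :=
    lt_of_pow_lt_pow_left₀ s (Nat.zero_le _) h2
  have h4 : 2 * K < 2 * 2 ^ (M / s) := by rw [pow_succ] at h3; omega
  omega

lemma ratio_bound (c s M : ℕ) (hs : 1 ≤ s) (hsc : s + 1 ≤ c) (h : (32 * c) ^ s ≤ 2 ^ M) :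
    16 * c * s ^ M ≤ (s + 1) ^ M := by
  have h1 : 2 * s ^ s ≤ (s + 1) ^ s := by
    have := two_pow_mul_le s 1 hs
    simpa using this
  have h2 : 2 ^ (M / s) * s ^ M ≤ (s + 1) ^ M :=
    pow_div_bound (s+1) s s M hs (Nat.le_succ s) h1
  have h3 : 16 * c ≤ 2 ^ (M / s) := by
    apply log_div_bound (16 * c) s M hs
    calc (2 * (16 * c)) ^ s = (32 * c) ^ s := by ring_nf
      _ ≤ 2 ^ M := h
  calc 16 * c * s ^ M ≤ 2 ^ (M / s) * s ^ M := Nat.mul_le_mul_right _ h3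
    _ ≤ (s + 1) ^ M := h2

/-- lower bound for Stirling numbers -/
lemma stirling_lower (M c : ℕ) (hc : 2 ≤ c) (h : (32 * c) ^ c ≤ 2 ^ M) :
    7 * c ^ M ≤ 8 * (c.factorial * stirling M c) := by
  have hM : 1 ≤ M := by
    by_contra hM
    have hM0 : M = 0 := by omega
    subst hM0
    have : (32 * c) ^ c ≥ 64 ^ 2 := by
      calc (32*c)^c ≥ 64 ^ c := Nat.pow_le_pow_left (by omega) c
        _ ≥ 64 ^ 2 := Nat.pow_le_pow_right (by norm_num) hc
    simp at h; omega
  set T : ℕ → ℕ := fun j => c.choose j * j ^ M with hT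
  have hstep : ∀ s, 1 ≤ s → s + 1 ≤ c - 1 → 2 * T s ≤ T (s + 1) := by
    intro s hs1 hsc1
    have hrb : 16 * c * s ^ M ≤ (s + 1) ^ M := by
      apply ratio_bound c s M hs1 (by omega)
      calc (32 * c) ^ s ≤ (32 * c) ^ c := Nat.pow_le_pow_right (by omega) (by omega)
        _ ≤ 2 ^ M := h
    have hckey : c.choose (s+1) * (s+1) = c.choose s * (c - s) := Nat.choose_succ_right_eq c s
    have hcs : 0 < c.choose s := Nat.choose_pos (by omega)
    have main : (2 * T s) * (s + 1) ≤ T (s+1) * (s+1) := by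
      simp only [hT]
      calc 2 * (c.choose s * s ^ M) * (s + 1)
          = c.choose s * (2 * (s+1) * s ^ M) := by ring
        _ ≤ c.choose s * ((c - s) * (s+1) ^ M) := by
            apply Nat.mul_le_mul_left
            have h1 : 2 * (s + 1) ≤ 16 * c := by omega
            have h2 : 1 ≤ c - s := by omega
            calc 2 * (s+1) * s ^ M ≤ 16 * c * s ^ M := Nat.mul_le_mul_right _ h1
              _ ≤ (s+1) ^ M := hrb
              _ = 1 * (s+1) ^ M := (one_mul _).symm
              _ ≤ (c-s) * (s+1) ^ M := Nat.mul_le_mul_right _ h2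
        _ = c.choose (s+1) * (s+1) * (s+1) ^ M := by rw [hckey]; ring
        _ = c.choose (s+1) * (s+1) ^ M * (s+1) := by ring
    exact Nat.le_of_mul_le_mul_right main (by omega)
  have hT0 : T 0 = 0 := by simp [hT, Nat.zero_pow hM]
  have hsum : ∀ s, s ≤ c - 1 → (∑ j ∈ Finset.range (s+1), T j) ≤ 2 * T s := by
    intro s
    induction s with
    | zero => intro _; simp [hT0]
    | succ s ih =>
      intro hs
      rw [Finset.sum_range_succ]
      have h1 : (∑ j ∈ Finset.range (s+1), T j) ≤ 2 * T s := ih (by omega)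
      have h2 : 2 * T s ≤ T (s+1) := by
        rcases Nat.eq_zero_or_pos s with hz | hp
        · subst hz; simp [hT0]
        · exact hstep s hp hs
      omega
  have htail : (∑ j ∈ Finset.range c, T j) ≤ 2 * T (c - 1) := by
    have hc1 : c = (c - 1) + 1 := by omega
    rw [hc1] at *
    exact hsum (c-1) (le_refl _)
  have hTc1 : T (c - 1) = c * (c-1) ^ M := by
    simp only [hT]
    congr 1
    rw [Nat.choose_symm (by omega), Nat.choose_one_right]
  have hmain : 16 * c * (c-1) ^ M ≤ c ^ M := by
    have h1 : 2 * (c-1) ^ (c-1) ≤ c ^ (c-1) := by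
      have h2 := two_pow_mul_le (c-1) 1 (by omega)
      have e : c - 1 + 1 = c := by omega
      rw [e] at h2
      simpa using h2
    have h2 : 2 ^ (M / (c-1)) * (c-1) ^ M ≤ c ^ M :=
      pow_div_bound c (c-1) (c-1) M (by omega) (by omega) h1
    have h3 : 16 * c ≤ 2 ^ (M / (c-1)) := by
      apply log_div_bound (16*c) (c-1) M (by omega)
      calc (2 * (16*c)) ^ (c-1) = (32 * c) ^ (c-1) := by ring_nf
        _ ≤ (32 * c) ^ c := Nat.pow_le_pow_right (by omega) (by omega)
        _ ≤ 2 ^ M := h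
    calc 16 * c * (c-1)^M ≤ 2 ^ (M/(c-1)) * (c-1)^M := Nat.mul_le_mul_right _ h3
      _ ≤ c ^ M := h2
  have hid : c ^ M = (∑ j ∈ Finset.range c, c.choose j * j.factorial * stirling M j)
      + c.factorial * stirling M c := by
    rw [pow_eq_sum_stirling c M, Finset.sum_range_succ, Nat.choose_self, one_mul]
  have htail2 : (∑ j ∈ Finset.range c, c.choose j * j.factorial * stirling M j)
      ≤ ∑ j ∈ Finset.range c, T j := by
    apply Finset.sum_le_sum
    intro j _
    simp only [hT]
    calc c.choose j * j.factorial * stirling M j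
        = c.choose j * (j.factorial * stirling M j) := by ring
      _ ≤ c.choose j * j ^ M := Nat.mul_le_mul_left _ (stirling_upper M j)
  have hfin := hTc1 ▸ htail
  have hmain' : 16 * (c * (c-1)^M) ≤ c ^ M := by
    calc 16 * (c * (c-1)^M) = 16*c*(c-1)^M := by ring
      _ ≤ c ^ M := hmain
  omega

/-- if `16B ≤ 2^((M-1)/(c-1))` and the SL-condition holds then `B·S(M-1,c-1) ≤ S(M,c)` -/
lemma stirling_ratio (B M c : ℕ) (hc : 2 ≤ c) (hM : 1 ≤ M)
    (hcond : (32*c) ^ c ≤ 2 ^ M) (hq : 16 * B ≤ 2 ^ ((M-1) / (c-1))) :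
    B * stirling (M-1) (c-1) ≤ stirling M c := by
  have hSL := stirling_lower M c hc hcond
  have hSU := stirling_upper (M-1) (c-1)
  have h1 : 2 * (c-1) ^ (c-1) ≤ c ^ (c-1) := by
    have h2 := two_pow_mul_le (c-1) 1 (by omega)
    have e : c - 1 + 1 = c := by omega
    rw [e] at h2
    simpa using h2
  have hpd : 2 ^ ((M-1)/(c-1)) * (c-1) ^ (M-1) ≤ c ^ (M-1) :=
    pow_div_bound c (c-1) (c-1) (M-1) (by omega) (by omega) h1
  have hfac : c.factorial = c * (c-1).factorial := by
    rw [show c = (c-1)+1 by omega, Nat.factorial_succ]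
    simp
  have key : 8 * (c.factorial * (B * stirling (M-1) (c-1))) ≤ 8 * (c.factorial * stirling M c) := by
    calc 8 * (c.factorial * (B * stirling (M-1) (c-1)))
        = 8 * B * c * ((c-1).factorial * stirling (M-1) (c-1)) := by rw [hfac]; ring
      _ ≤ 8 * B * c * (c-1) ^ (M-1) := Nat.mul_le_mul_left _ hSU
      _ = c * (8 * B * (c-1) ^ (M-1)) := by ring
      _ ≤ c * (16 * B * (c-1) ^ (M-1)) := by
          apply Nat.mul_le_mul_left
          apply Nat.mul_le_mul_right
          omega
      _ ≤ c * (2 ^ ((M-1)/(c-1)) * (c-1)^(M-1)) := by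
          apply Nat.mul_le_mul_left
          exact Nat.mul_le_mul_right _ hq
      _ ≤ c * c ^ (M-1) := Nat.mul_le_mul_left _ hpd
      _ = c ^ M := by rw [← pow_succ']; congr 1; omega
      _ ≤ 7 * c ^ M := by omega
      _ ≤ 8 * (c.factorial * stirling M c) := hSL
  have h8 := Nat.le_of_mul_le_mul_left key (by norm_num)
  exact Nat.le_of_mul_le_mul_left h8 (Nat.factorial_pos c)

/-! ### alternating sums -/

lemma alt_peel (d : ℕ → ℕ) (s m : ℕ) (h : s ≤ m) :
    (∑ j ∈ Finset.Icc s m, (-1:ℤ) ^ (j - s) * d j)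
    = d s - ∑ j ∈ Finset.Icc (s+1) m, (-1:ℤ) ^ (j - (s+1)) * d j := by
  rw [Finset.Icc_eq_cons_Ioc h, Finset.sum_cons]
  simp only [Nat.sub_self, pow_zero, one_mul]
  have h1 : Finset.Ioc s m = Finset.Icc (s+1) m := by
    ext x; simp
  rw [h1]
  have h2 : (∑ j ∈ Finset.Icc (s+1) m, (-1:ℤ) ^ (j - s) * d j)
      = - ∑ j ∈ Finset.Icc (s+1) m, (-1:ℤ) ^ (j - (s+1)) * d j := by
    rw [← Finset.sum_neg_distrib]
    apply Finset.sum_congr rfl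
    intro j hj
    simp only [Finset.mem_Icc] at hj
    have e : j - s = (j - (s+1)) + 1 := by omega
    rw [e, pow_succ]
    ring
  rw [h2]
  ring

lemma alt_bounds (d : ℕ → ℕ) : ∀ (k s : ℕ),
    (∀ j, s ≤ j → j < s + k → d (j+1) ≤ d j) →
    0 ≤ (∑ j ∈ Finset.Icc s (s+k), (-1:ℤ) ^ (j - s) * d j) ∧
    (∑ j ∈ Finset.Icc s (s+k), (-1:ℤ) ^ (j - s) * d j) ≤ d s := by
  intro k
  induction k with
  | zero =>
    intro s _
    simp
  | succ k ih =>
    intro s hd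
    rw [alt_peel d s (s + (k+1)) (by omega)]
    have e : s + (k + 1) = (s+1) + k := by omega
    rw [e]
    obtain ⟨h1, h2⟩ := ih (s+1) (fun j hj hj2 => hd j (by omega) (by omega))
    have h3 : (d (s+1) : ℤ) ≤ d s := by
      exact_mod_cast hd s (le_refl s) (by omega)
    constructor
    · linarith
    · linarith [Int.natCast_nonneg (d s), Int.natCast_nonneg (d (s+1))]

lemma alt_upper (d : ℕ → ℕ) (m : ℕ) (hm : 1 ≤ m)
    (hd : ∀ j, 1 ≤ j → j < m → d (j+1) ≤ d j) :
    (∑ j ∈ Finset.Icc 1 m, (-1:ℤ) ^ (j - 1) * d j) ≤ d 1 := by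
  have e : m = 1 + (m - 1) := by omega
  rw [e] at hd ⊢
  exact (alt_bounds d (m-1) 1 (fun j h1 h2 => hd j h1 (by omega))).2

lemma alt_lower (d : ℕ → ℕ) (m : ℕ) (hm : 2 ≤ m)
    (hd : ∀ j, 1 ≤ j → j < m → d (j+1) ≤ d j) :
    (d 1 : ℤ) - d 2 ≤ (∑ j ∈ Finset.Icc 1 m, (-1:ℤ) ^ (j - 1) * d j) := by
  rw [alt_peel d 1 m (by omega)]
  have e : m = 2 + (m - 2) := by omega
  rw [e] at hd ⊢
  have := (alt_bounds d (m-2) 2 (fun j h1 h2 => hd j (by omega) (by omega))).2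
  linarith

/-! ### the final power comparison -/

lemma two_pow_ge (d : ℕ) (hd : 2 ≤ d) : d + 2 ≤ 2 ^ d := by
  induction d with
  | zero => omega
  | succ d ih =>
    rcases Nat.lt_or_ge d 2 with h | h
    · interval_cases d <;> simp_all
    · have := ih h
      rw [pow_succ]
      omega

lemma binom_two (m j : ℕ) (hj : 1 ≤ j) : m ^ (j-1) * (m + j) ≤ (m+1) ^ j := by
  induction j with
  | zero => omega
  | succ j ih =>
    rcases Nat.eq_zero_or_pos j with hz | hp
    · subst hz; simp
    · have h := ih hp
      have e : j + 1 - 1 = (j - 1) + 1 := by omega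
      rw [e, pow_succ, pow_succ]
      have inner : m * (m + (j+1)) ≤ (m + j) * (m+1) := by nlinarith
      calc m ^ (j-1) * m * (m + (j+1)) = m ^ (j-1) * (m * (m + (j+1))) := by ring
        _ ≤ m ^ (j-1) * ((m + j) * (m+1)) := Nat.mul_le_mul_left _ inner
        _ = (m ^ (j-1) * (m + j)) * (m+1) := by ring
        _ ≤ (m+1)^j * (m+1) := Nat.mul_le_mul_right _ h

lemma final_comparison (a b N : ℕ) (hb : 2 ≤ b) (hab : b < a) (hN : a * b + 1 ≤ N) :
    4608 * a * (a * (b-1)) ^ (N-1) < 2744 * b * (b * (a-1)) ^ (N-1) := by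
  set m := a * (b - 1) with hm
  set d := a - b with hd
  have hmd : b * (a - 1) = m + d := by
    simp only [hm, hd]
    have h2 : b ≤ a := by omega
    zify [show 1 ≤ a by omega, show 1 ≤ b by omega, h2]
    ring
  have hdm : d ≤ m := by
    have : a ≤ a * (b-1) := Nat.le_mul_of_pos_right a (by omega)
    omega
  have hmN : m + a ≤ N - 1 := by
    have h3 : m + a = a * b := by
      simp only [hm]
      have h4 : b - 1 + 1 = b := by omega
      nlinarith [h4]
    omega
  have hm3 : 3 ≤ m := by
    have : a * 1 ≤ a * (b-1) := Nat.mul_le_mul_left a (by omega)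
    omega
  rw [hmd]
  rcases Nat.lt_or_ge d 2 with hd1 | hd2
  · have hd1' : d = 1 := by omega
    have hab1 : a = b + 1 := by omega
    set j := N - 1 - m with hj
    have hNj : N - 1 = m + j := by omega
    have hja : a ≤ j := by omega
    have key1 : 2 * m ^ m ≤ (m + d) ^ m := by
      have := two_pow_mul_le m 1 (by omega)
      rw [hd1']
      simpa using this
    have key2 : m ^ (j-1) * (m + j) ≤ (m + 1) ^ j := binom_two m j (by omega)
    have expand : (m + d) ^ (N-1) = (m+d) ^ m * (m+d) ^ j := by
      rw [hNj, pow_add]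
    have lower : 2 * (m ^ (N-2) * (m + j)) ≤ (m + d) ^ (N-1) := by
      rw [expand, hd1']
      have e : N - 2 = m + (j - 1) := by omega
      calc 2 * (m ^ (N-2) * (m+j)) = (2 * m ^ m) * (m ^ (j-1) * (m+j)) := by
            rw [e, pow_add]; ring
        _ ≤ (m+1) ^ m * (m+1) ^ j := Nat.mul_le_mul (by rw [← hd1']; exact key1) key2
    have hmgt : 4608 * a * m ^ (N-1) < 5488 * b * (m ^ (N-2) * (m+j)) := by
      have e2 : m ^ (N-1) = m * m ^ (N-2) := by
        rw [show N - 1 = (N-2)+1 by omega, pow_succ]; ring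
      rw [e2]
      have hp : 0 < m ^ (N-2) := Nat.pow_pos (by omega)
      have hcore : 4608 * a * m < 5488 * b * (m + j) := by
        have h1 : m + b + 1 ≤ m + j := by omega
        have h2 : 5488 * b * (m + b + 1) ≤ 5488 * b * (m+j) := by
          apply Nat.mul_le_mul_left
          omega
        have h3 : 4608 * a * m < 5488 * b * (m + b + 1) := by
          have hmval : m = (b+1)*(b-1) := by rw [hm, hab1]
          rw [hab1, hmval]
          zify [show 1 ≤ b by omega]
          nlinarith [pow_nonneg (show (0:ℤ) ≤ (b:ℤ) by positivity) 3,
            pow_nonneg (show (0:ℤ) ≤ (b:ℤ) by positivity) 2,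
            show (0:ℤ) ≤ (b:ℤ) by positivity, show (2:ℤ) ≤ (b:ℤ) by exact_mod_cast hb]
        omega
      calc 4608 * a * (m * m ^ (N-2)) = (4608 * a * m) * m ^ (N-2) := by ring
        _ < (5488 * b * (m+j)) * m ^ (N-2) := (Nat.mul_lt_mul_right hp).mpr hcore
        _ = 5488 * b * (m ^ (N-2) * (m+j)) := by ring
    calc 4608 * a * m ^ (N-1) < 5488 * b * (m ^ (N-2) * (m+j)) := hmgt
      _ = 2744 * b * (2 * (m ^ (N-2) * (m+j))) := by ring
      _ ≤ 2744 * b * (m+d) ^ (N-1) := Nat.mul_le_mul_left _ lower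
  · have lower : 2 ^ d * m ^ (N-1) ≤ (m + d) ^ (N-1) := by
      set w := N - 1 - m with hw
      have e : N - 1 = m + w := by omega
      rw [e, pow_add, pow_add]
      calc 2 ^ d * (m ^ m * m ^ w) = (2 ^ d * m ^ m) * m ^ w := by ring
        _ ≤ (m+d) ^ m * (m+d) ^ w :=
            Nat.mul_le_mul (two_pow_mul_le m d hdm) (Nat.pow_le_pow_left (by omega) w)
    have hcore : 4608 * a < 2744 * b * 2 ^ d := by
      have h1 : d + 2 ≤ 2 ^ d := two_pow_ge d hd2
      have h2 : 2 * (b + d) ≤ b * 2 ^ d := by nlinarith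
      have h3 : a = b + d := by omega
      nlinarith
    have hp : 0 < m ^ (N-1) := Nat.pow_pos (by omega)
    calc 4608 * a * m ^ (N-1) < (2744 * b * 2 ^ d) * m ^ (N-1) :=
          (Nat.mul_lt_mul_right hp).mpr hcore
      _ = 2744 * b * (2 ^ d * m ^ (N-1)) := by ring
      _ ≤ 2744 * b * (m + d) ^ (N-1) := Nat.mul_le_mul_left _ lower

/-! ### bridge lemmas -/

lemma AL (a : ℕ) (ha : 3 ≤ a) : 2 ^ (4*a - 6) ≤ a ^ (a + 2) := by
  rcases Nat.lt_or_ge a 16 with h16 | h16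
  · rcases Nat.lt_or_ge a 8 with h8 | h8
    · interval_cases a <;> norm_num
    · rcases Nat.lt_or_ge a 13 with h13 | h13
      · calc 2 ^ (4*a-6) ≤ 2 ^ (3*a+6) := Nat.pow_le_pow_right (by norm_num) (by omega)
          _ = 8 ^ (a + 2) := by rw [show (8:ℕ) = 2^3 by norm_num, ← pow_mul]; ring_nf
          _ ≤ a ^ (a+2) := Nat.pow_le_pow_left h8 _
      · interval_cases a <;> norm_num
  · calc 2 ^ (4*a-6) ≤ 2 ^ (4*a+8) := Nat.pow_le_pow_right (by norm_num) (by omega)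
      _ = 16 ^ (a + 2) := by rw [show (16:ℕ) = 2^4 by norm_num, ← pow_mul]; ring_nf
      _ ≤ a ^ (a+2) := Nat.pow_le_pow_left h16 _

lemma two_le_pow_t (t : ℕ) : 8 * t ≤ 2 ^ (t + 2) := by
  induction t with
  | zero => norm_num
  | succ t ih =>
    rcases Nat.eq_zero_or_pos t with h0 | h1
    · subst h0; norm_num
    rw [pow_succ]
    have : 8 ≤ 2 ^ (t+2) := by
      calc (8:ℕ) = 2^3 := by norm_num
        _ ≤ 2^(t+2) := Nat.pow_le_pow_right (show 1 ≤ 2 by norm_num) (show 3 ≤ t+2 by omega)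
    omega

lemma master (t a N b : ℕ) (ht : 1 ≤ t) (ha : 3 ≤ a) (hba : b < a)
    (h2N : 2 ^ (t+2) * ((t+1)*(a+1)) ^ (2*a+2) ≤ 2 ^ N) : (32*a) ^ a ≤ 2 ^ (N - b) := by
  set P := (t+1)*(a+1) with hP
  have key : 2 ^ b * (32*a) ^ a ≤ 2 ^ N := by
    calc 2 ^ b * (32*a)^a ≤ 2 ^ (a-1) * (32*a)^a := by
          apply Nat.mul_le_mul_right
          exact Nat.pow_le_pow_right (by norm_num) (by omega)
      _ = 2 ^ (a-1) * (2^(5*a) * a^a) := by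
          congr 1
          rw [mul_pow, show (32:ℕ) = 2^5 by norm_num, ← pow_mul]
      _ = 2 ^ (6*a-1) * a^a := by
          rw [← mul_assoc, ← pow_add]
          congr 2
          omega
      _ = 2 ^ (2*a+5) * 2 ^ (4*a-6) * a^a := by
          rw [← pow_add]
          congr 2
          omega
      _ ≤ 2 ^ (2*a+5) * a^(a+2) * a^a := by
          apply Nat.mul_le_mul_right
          exact Nat.mul_le_mul_left _ (AL a ha)
      _ = 8 * (2^(2*a+2) * a^(2*a+2)) := by
          have e1 : a^(a+2)*a^a = a^(2*a+2) := by rw [← pow_add]; congr 1; omega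
          have e2 : (2:ℕ)^(2*a+5) = 8 * 2^(2*a+2) := by
            rw [show 2*a+5 = 3+(2*a+2) by omega, pow_add]; norm_num
          rw [mul_assoc, e1, e2]; ring
      _ = 8 * (2*a)^(2*a+2) := by rw [mul_pow]
      _ ≤ 2^(t+2) * P^(2*a+2) := by
          apply Nat.mul_le_mul
          · calc (8:ℕ) = 2^3 := by norm_num
              _ ≤ 2^(t+2) := Nat.pow_le_pow_right (by norm_num) (by omega)
          · apply Nat.pow_le_pow_left
            calc 2*a ≤ 2*(a+1) := by omega
              _ ≤ (t+1)*(a+1) := Nat.mul_le_mul_right _ (by omega)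
      _ ≤ 2 ^ N := h2N
  have hbN : b ≤ N := by
    have h1 : 2 ^ b ≤ 2 ^ N := by
      calc 2^b = 2^b * 1 := (mul_one _).symm
        _ ≤ 2^b * (32*a)^a := Nat.mul_le_mul_left _ (Nat.one_le_pow _ _ (by omega))
        _ ≤ 2 ^ N := key
    exact (Nat.pow_le_pow_iff_right (by norm_num)).mp h1
  have hsplit : 2 ^ N = 2 ^ b * 2 ^ (N - b) := by
    rw [← pow_add]
    congr 1
    omega
  rw [hsplit] at key
  exact Nat.le_of_mul_le_mul_left key (Nat.pow_pos (by norm_num))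

/-! ### main nat inequality -/

lemma final_nat (a b t N u u1 v s1 c2' : ℕ)
    (ha : 3 ≤ a) (hb : 2 ≤ b) (hba : b < a) (hN : a*b+1 ≤ N)
    (hSLu : 7*b^N ≤ 8*(b.factorial * u))
    (hSLs1 : 7*(a-1)^(N-1) ≤ 8*((a-1).factorial * s1))
    (hSUu1 : (b-1).factorial * u1 ≤ (b-1)^(N-1))
    (hSUv : a.factorial * v ≤ a^N)
    (hta : 8*(t*a.factorial) ≤ a^N)
    (hc2 : 8*c2' ≤ b*s1) :
    a*u1*(v+t) < (b*s1 - c2') * u := by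
  have hN1 : 1 ≤ N := by nlinarith
  set X := (b*s1 - c2') * u with hX
  set Y := a*u1*(v+t) with hY
  have hA1 : 7*(b*s1) ≤ 8*(b*s1 - c2') := by omega
  have h1 : 343*(b*((a-1)^(N-1)*b^N)) ≤ 512*((a-1).factorial*(b.factorial*X)) := by
    calc 343*(b*((a-1)^(N-1)*b^N)) = (7*(a-1)^(N-1))*((7*b^N)*(7*b)) := by ring
      _ ≤ (8*((a-1).factorial * s1))*((7*b^N)*(7*b)) := Nat.mul_le_mul_right _ hSLs1
      _ ≤ (8*((a-1).factorial * s1))*((8*(b.factorial*u))*(7*b)) := by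
          apply Nat.mul_le_mul_left
          exact Nat.mul_le_mul_right _ hSLu
      _ = (7*(b*s1))*(64*((a-1).factorial*(b.factorial*u))) := by ring
      _ ≤ (8*(b*s1 - c2'))*(64*((a-1).factorial*(b.factorial*u))) := Nat.mul_le_mul_right _ hA1
      _ = 512*((a-1).factorial*(b.factorial*((b*s1-c2')*u))) := by ring
  have h2 : 8*((b-1).factorial*(a.factorial*Y)) ≤ 9*(a*((b-1)^(N-1)*a^N)) := by
    calc 8*((b-1).factorial*(a.factorial*Y))
        = a*(((b-1).factorial*u1) * (8*(a.factorial*v) + 8*(t*a.factorial))) := by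
          rw [hY]; ring
      _ ≤ a*((b-1)^(N-1) * (8*a^N + a^N)) := by
          apply Nat.mul_le_mul_left
          apply Nat.mul_le_mul hSUu1
          apply Nat.add_le_add
          · omega
          · exact hta
      _ = 9*(a*((b-1)^(N-1)*a^N)) := by ring
  have hFC := final_comparison a b N hb hba hN
  have hF : (9*(a*((b-1)^(N-1)*a^N)))*(512*((a-1).factorial*b.factorial))
      < (343*(b*((a-1)^(N-1)*b^N)))*(8*((b-1).factorial*a.factorial)) := by
    have hW : 0 < a*b*((a-1).factorial*(b-1).factorial) := by positivity
    have hafac : a.factorial = a*(a-1).factorial := by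
      rw [show a = (a-1)+1 by omega, Nat.factorial_succ]; simp
    have hbfac : b.factorial = b*(b-1).factorial := by
      rw [show b = (b-1)+1 by omega, Nat.factorial_succ]; simp
    have epowa : a^N = a^(N-1)*a := by
      conv_lhs => rw [show N = (N-1)+1 by omega]
      rw [pow_succ]
    have epowb : b^N = b^(N-1)*b := by
      conv_lhs => rw [show N = (N-1)+1 by omega]
      rw [pow_succ]
    have eq1 : (9*(a*((b-1)^(N-1)*a^N)))*(512*((a-1).factorial*b.factorial))
        = (4608*a*(a*(b-1))^(N-1)) * (a*b*((a-1).factorial*(b-1).factorial)) := by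
      rw [epowa, hbfac, mul_pow]
      ring
    have eq2 : (343*(b*((a-1)^(N-1)*b^N)))*(8*((b-1).factorial*a.factorial))
        = (2744*b*(b*(a-1))^(N-1)) * (a*b*((a-1).factorial*(b-1).factorial)) := by
      rw [epowb, hafac, mul_pow]
      ring
    rw [eq1, eq2]
    exact (Nat.mul_lt_mul_right hW).mpr hFC
  have hfinal : (8*((b-1).factorial*a.factorial)) * (512*((a-1).factorial*(b.factorial*Y)))
      < (8*((b-1).factorial*a.factorial)) * (512*((a-1).factorial*(b.factorial*X))) := by
    calc (8*((b-1).factorial*a.factorial)) * (512*((a-1).factorial*(b.factorial*Y)))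
        = (8*((b-1).factorial*(a.factorial*Y))) * (512*((a-1).factorial*b.factorial)) := by ring
      _ ≤ (9*(a*((b-1)^(N-1)*a^N)))*(512*((a-1).factorial*b.factorial)) :=
          Nat.mul_le_mul_right _ h2
      _ < (343*(b*((a-1)^(N-1)*b^N)))*(8*((b-1).factorial*a.factorial)) := hF
      _ ≤ (512*((a-1).factorial*(b.factorial*X)))*(8*((b-1).factorial*a.factorial)) :=
          Nat.mul_le_mul_right _ h1
      _ = (8*((b-1).factorial*a.factorial)) * (512*((a-1).factorial*(b.factorial*X))) := by ring
  have hY' := Nat.lt_of_mul_lt_mul_left hfinal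
  have h512 : (512:ℕ) > 0 := by norm_num
  have hY'' := Nat.lt_of_mul_lt_mul_left hY'
  have hY3 := Nat.lt_of_mul_lt_mul_left hY''
  exact Nat.lt_of_mul_lt_mul_left hY3

set_option maxHeartbeats 2000000 in
theorem stmt_19 (n k l t : ℕ) (ht : 1 ≤ t) (hlt : t + 2 ≤ l) (hkl : l < k)
    (hn : (n : ℝ) ≥ max (2 * Lfun k t) ((t : ℝ) + 1 + ((k : ℝ) - t) * ((l : ℝ) - t))) :
    r1 n k l t > r1 n l k t := by
  have htk : t ≤ k := by omega
  have htl : t ≤ l := by omega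
  simp only [r1, gt_iff_lt]
  set a := k - t with ha_def
  set b := l - t with hb_def
  set N := n - t with hN_def
  have hb2 : 2 ≤ b := by omega
  have hba : b < a := by omega
  have ha3 : 3 ≤ a := by omega
  have hcast_a : ((a : ℕ) : ℝ) = (k : ℝ) - t := by
    rw [ha_def]; push_cast [Nat.cast_sub htk]; ring
  have hcast_b : ((b : ℕ) : ℝ) = (l : ℝ) - t := by
    rw [hb_def]; push_cast [Nat.cast_sub htl]; ring
  -- first size bound
  have hnab : t + 1 + a * b ≤ n := by
    have h := (le_max_right (2 * Lfun k t) _).trans hn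
    rw [← hcast_a, ← hcast_b] at h
    have h2 : ((t + 1 + a * b : ℕ) : ℝ) ≤ (n : ℝ) := by push_cast; linarith
    exact_mod_cast h2
  have htn : t ≤ n := by omega
  have hNab : a * b + 1 ≤ N := by omega
  have hab2a : 2 * a ≤ a * b := by nlinarith
  have hNbig : 2 * a + 1 ≤ N := by omega
  -- second size bound
  have h2N : 2 ^ (t+2) * ((t+1)*(a+1)) ^ (2*a+2) ≤ 2 ^ N := by
    have hL := (le_max_left (2 * Lfun k t) _).trans hn
    rw [Lfun, ← hcast_a] at hL
    set Pn : ℕ := (t+1)*(a+1) with hPn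
    have hPcast : ((Pn : ℕ) : ℝ) = ((t:ℝ)+1) * ((a:ℝ)+1) := by rw [hPn]; push_cast; ring
    have hPpos : (0:ℝ) < (Pn : ℝ) := by rw [hPcast]; positivity
    have hNcast : ((N : ℕ) : ℝ) = (n : ℝ) - t := by
      rw [hN_def]; push_cast [Nat.cast_sub htn]; ring
    have hNreal : ((t:ℝ)+2) + (2*(a:ℝ)+2) * Real.logb 2 (Pn : ℝ) ≤ ((N : ℕ) : ℝ) := by
      rw [hNcast, hPcast]
      have : ((a:ℝ)+1) * Real.logb 2 (((t:ℝ)+1) * ((a:ℝ)+1)) =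
          ((a:ℝ)+1) * Real.logb 2 (((t:ℝ)+1) * ((a:ℝ)+1)) := rfl
      nlinarith [hL]
    have hrp := Real.rpow_le_rpow_of_exponent_le (show (1:ℝ) ≤ 2 by norm_num) hNreal
    have lhs_eq : (2:ℝ) ^ (((t:ℝ)+2) + (2*(a:ℝ)+2) * Real.logb 2 (Pn:ℝ))
        = ((2^(t+2) * Pn^(2*a+2) : ℕ) : ℝ) := by
      rw [Real.rpow_add (by norm_num : (0:ℝ) < 2)]
      rw [show (2*(a:ℝ)+2) * Real.logb 2 (Pn:ℝ)
          = Real.logb 2 (Pn:ℝ) * ((2*a+2 : ℕ) : ℝ) by push_cast; ring]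
      rw [Real.rpow_mul (by norm_num : (0:ℝ) ≤ 2)]
      rw [Real.rpow_logb (by norm_num) (by norm_num) hPpos]
      rw [Real.rpow_natCast]
      rw [show ((t:ℝ)+2) = ((t+2 : ℕ) : ℝ) by push_cast; ring]
      rw [Real.rpow_natCast]
      push_cast
      ring
    have rhs_eq : (2:ℝ) ^ (((N:ℕ)):ℝ) = ((2^N : ℕ) : ℝ) := by
      rw [Real.rpow_natCast]; push_cast; ring
    rw [lhs_eq, rhs_eq] at hrp
    exact_mod_cast hrp
  have hmaster : (32*a) ^ a ≤ 2 ^ (N - b) := master t a N b ht ha3 hba h2N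
  -- condition generator
  have hcond : ∀ (c' j : ℕ), c' ≤ a → 1 ≤ c' → j ≤ b → (32*c')^c' ≤ 2^(N-j) := by
    intro c' j h1 h2 h3
    calc (32*c')^c' ≤ (32*a)^c' := Nat.pow_le_pow_left (by omega) _
      _ ≤ (32*a)^a := Nat.pow_le_pow_right (by omega) h1
      _ ≤ 2^(N-b) := hmaster
      _ ≤ 2^(N-j) := Nat.pow_le_pow_right (by norm_num) (by omega)
  have hq16a : ∀ (s M' : ℕ), 1 ≤ s → s ≤ a → N - b ≤ M' → 16*a ≤ 2^(M'/s) := by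
    intro s M' hs hsa hM'
    apply log_div_bound (16*a) s M' hs
    calc (2*(16*a))^s = (32*a)^s := by ring_nf
      _ ≤ (32*a)^a := Nat.pow_le_pow_right (by omega) hsa
      _ ≤ 2^(N-b) := hmaster
      _ ≤ 2^M' := Nat.pow_le_pow_right (by norm_num) hM'
  -- stirling bounds
  have hSLu : 7*b^N ≤ 8*(b.factorial * stirling N b) := by
    apply stirling_lower N b hb2
    have h := hcond b 0 (by omega) (by omega) (by omega)
    rwa [Nat.sub_zero] at h
  have hSLs1 : 7*(a-1)^(N-1) ≤ 8*((a-1).factorial * stirling (N-1) (a-1)) :=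
    stirling_lower (N-1) (a-1) (by omega) (hcond (a-1) 1 (by omega) (by omega) (by omega))
  have hSUu1 : (b-1).factorial * stirling (N-1) (b-1) ≤ (b-1)^(N-1) := stirling_upper _ _
  have hSUv : a.factorial * stirling N a ≤ a^N := stirling_upper _ _
  have hta : 8*(t*a.factorial) ≤ a^N := by
    calc 8*(t*a.factorial) = (8*t)*a.factorial := by ring
      _ ≤ 2^(t+2) * a.factorial := Nat.mul_le_mul_right _ (two_le_pow_t t)
      _ ≤ 2^(t+2) * ((t+1)*(a+1))^(2*a+2) := by
          apply Nat.mul_le_mul_left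
          calc a.factorial ≤ a^a := Nat.factorial_le_pow a
            _ ≤ ((t+1)*(a+1))^a := Nat.pow_le_pow_left (by nlinarith) a
            _ ≤ ((t+1)*(a+1))^(2*a+2) := Nat.pow_le_pow_right (by positivity) (by omega)
      _ ≤ 2^N := h2N
      _ ≤ a^N := Nat.pow_le_pow_left (by omega) N
  -- s2 vs s1
  have hs2s1 : 4*(b-1)*(stirling (N-2) (a-2)) ≤ stirling (N-1) (a-1) := by
    have hq2 : 16*a ≤ 2^((N-2)/(a-2)) := hq16a (a-2) (N-2) (by omega) (by omega) (by omega)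
    have hpd2 : 2^((N-2)/(a-2)) * (a-2)^(N-2) ≤ (a-1)^(N-2) := by
      apply pow_div_bound (a-1) (a-2) (a-2) (N-2) (by omega) (by omega)
      have h := two_pow_mul_le (a-2) 1 (by omega)
      rw [show (a-2)+1 = a-1 by omega] at h
      simpa using h
    have hkey : 32*(b-1)*(a-2)^(N-2) ≤ 7*(a-1)^(N-2) := by
      calc 32*(b-1)*(a-2)^(N-2) ≤ 7*(16*a)*(a-2)^(N-2) := Nat.mul_le_mul_right _ (by omega)
        _ = 7*((16*a)*(a-2)^(N-2)) := by ring
        _ ≤ 7*(2^((N-2)/(a-2))*(a-2)^(N-2)) :=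
            Nat.mul_le_mul_left _ (Nat.mul_le_mul_right _ hq2)
        _ ≤ 7*(a-1)^(N-2) := Nat.mul_le_mul_left _ hpd2
    have hfa : (a-1).factorial = (a-1)*(a-2).factorial := by
      rw [show a-1 = (a-2)+1 by omega, Nat.factorial_succ]
    have hchain : (8*(a-1).factorial) * (4*(b-1)*stirling (N-2) (a-2))
        ≤ (8*(a-1).factorial) * stirling (N-1) (a-1) := by
      calc (8*(a-1).factorial) * (4*(b-1)*stirling (N-2) (a-2))
          = (a-1) * (32*(b-1)*((a-2).factorial * stirling (N-2) (a-2))) := by rw [hfa]; ring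
        _ ≤ (a-1) * (32*(b-1)*(a-2)^(N-2)) :=
            Nat.mul_le_mul_left (a-1) (Nat.mul_le_mul_left (32*(b-1)) (stirling_upper _ _))
        _ ≤ (a-1) * (7*(a-1)^(N-2)) := Nat.mul_le_mul_left (a-1) hkey
        _ = 7*((a-1)^(N-2)*(a-1)) := by ring
        _ = 7*(a-1)^(N-1) := by rw [← pow_succ, show N-2+1 = N-1 by omega]
        _ ≤ 8*((a-1).factorial * stirling (N-1) (a-1)) := hSLs1
        _ = (8*(a-1).factorial) * stirling (N-1) (a-1) := by ring
    exact Nat.le_of_mul_le_mul_left hchain (by positivity)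
  have hc2 : 8*(Nat.choose b 2 * stirling (N-2) (a-2)) ≤ b * stirling (N-1) (a-1) := by
    have h2c2 : (Nat.choose b 2)*2 = b*(b-1) := by
      have h := Nat.choose_succ_right_eq b 1
      rwa [Nat.choose_one_right] at h
    have key : 2*(8*(Nat.choose b 2 * stirling (N-2) (a-2))) ≤ 2*(b * stirling (N-1) (a-1)) := by
      calc 2*(8*(Nat.choose b 2 * stirling (N-2) (a-2)))
          = 8*((Nat.choose b 2*2) * stirling (N-2) (a-2)) := by ring
        _ = 8*((b*(b-1)) * stirling (N-2) (a-2)) := by rw [h2c2]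
        _ = 2*b*(4*(b-1)*stirling (N-2) (a-2)) := by ring
        _ ≤ 2*b*(stirling (N-1) (a-1)) := Nat.mul_le_mul_left _ hs2s1
        _ = 2*(b * stirling (N-1) (a-1)) := by ring
    exact Nat.le_of_mul_le_mul_left key (by norm_num)
  -- decreasing term sequences
  set dA : ℕ → ℕ := fun j => Nat.choose b j * stirling (N-j) (a-j) with hdA
  set dB : ℕ → ℕ := fun j => Nat.choose a j * stirling (N-j) (b-j) with hdB
  have hdecA : ∀ j, 1 ≤ j → j < b → dA (j+1) ≤ dA j := by
    intro j h1 h2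
    have hstir : b * stirling (N-j-1) (a-j-1) ≤ stirling (N-j) (a-j) := by
      apply stirling_ratio b (N-j) (a-j) (by omega) (by omega)
        (hcond (a-j) j (by omega) (by omega) (by omega))
      have h := hq16a (a-j-1) (N-j-1) (by omega) (by omega) (by omega)
      omega
    simp only [hdA]
    rw [show N-(j+1) = N-j-1 by omega, show a-(j+1) = a-j-1 by omega]
    have hch : b.choose (j+1) * (j+1) = b.choose j * (b-j) := Nat.choose_succ_right_eq b j
    have main : (b.choose (j+1) * stirling (N-j-1) (a-j-1)) * (j+1)
        ≤ (b.choose j * stirling (N-j) (a-j)) * (j+1) := by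
      calc (b.choose (j+1) * stirling (N-j-1) (a-j-1)) * (j+1)
          = (b.choose (j+1) * (j+1)) * stirling (N-j-1) (a-j-1) := by ring
        _ = b.choose j * ((b-j) * stirling (N-j-1) (a-j-1)) := by rw [hch]; ring
        _ ≤ b.choose j * (b * stirling (N-j-1) (a-j-1)) :=
            Nat.mul_le_mul_left _ (Nat.mul_le_mul_right _ (by omega))
        _ ≤ b.choose j * stirling (N-j) (a-j) := Nat.mul_le_mul_left _ hstir
        _ ≤ (b.choose j * stirling (N-j) (a-j)) * (j+1) :=
            Nat.le_mul_of_pos_right _ (by omega)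
    exact Nat.le_of_mul_le_mul_right main (by omega)
  have hdecB : ∀ j, 1 ≤ j → j < a → dB (j+1) ≤ dB j := by
    intro j h1 h2
    rcases Nat.lt_or_ge j (b-1) with hj | hj
    · have hstir : a * stirling (N-j-1) (b-j-1) ≤ stirling (N-j) (b-j) := by
        apply stirling_ratio a (N-j) (b-j) (by omega) (by omega)
          (hcond (b-j) j (by omega) (by omega) (by omega))
        exact hq16a (b-j-1) (N-j-1) (by omega) (by omega) (by omega)
      simp only [hdB]
      rw [show N-(j+1) = N-j-1 by omega, show b-(j+1) = b-j-1 by omega]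
      have hch : a.choose (j+1) * (j+1) = a.choose j * (a-j) := Nat.choose_succ_right_eq a j
      have main : (a.choose (j+1) * stirling (N-j-1) (b-j-1)) * (j+1)
          ≤ (a.choose j * stirling (N-j) (b-j)) * (j+1) := by
        calc (a.choose (j+1) * stirling (N-j-1) (b-j-1)) * (j+1)
            = (a.choose (j+1) * (j+1)) * stirling (N-j-1) (b-j-1) := by ring
          _ = a.choose j * ((a-j) * stirling (N-j-1) (b-j-1)) := by rw [hch]; ring
          _ ≤ a.choose j * (a * stirling (N-j-1) (b-j-1)) :=
              Nat.mul_le_mul_left _ (Nat.mul_le_mul_right _ (by omega))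
          _ ≤ a.choose j * stirling (N-j) (b-j) := Nat.mul_le_mul_left _ hstir
          _ ≤ (a.choose j * stirling (N-j) (b-j)) * (j+1) :=
              Nat.le_mul_of_pos_right _ (by omega)
      exact Nat.le_of_mul_le_mul_right main (by omega)
    · simp only [hdB]
      rw [show b-(j+1) = 0 by omega, stirling_zero' (N-(j+1)) (by omega)]
      simp
  -- alternating sum bounds
  have hAlow := alt_lower dA b hb2 hdecA
  have hBup := alt_upper dB a (by omega) hdecB
  have hdA1 : dA 1 = b * stirling (N-1) (a-1) := by
    simp only [hdA]; rw [Nat.choose_one_right]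
  have hdA2 : dA 2 = Nat.choose b 2 * stirling (N-2) (a-2) := by simp only [hdA]
  have hdB1 : dB 1 = a * stirling (N-1) (b-1) := by
    simp only [hdB]; rw [Nat.choose_one_right]
  -- rewrite the sums
  have hSA : (∑ j ∈ Finset.Icc 1 b,
      (-1:ℤ)^(j-1) * (Nat.choose b j) * (stirling (N-j) (a-j)))
      = ∑ j ∈ Finset.Icc 1 b, (-1:ℤ)^(j-1) * (dA j) := by
    apply Finset.sum_congr rfl
    intro j _
    simp only [hdA]
    push_cast
    ring
  have hSB : (∑ j ∈ Finset.Icc 1 a,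
      (-1:ℤ)^(j-1) * (Nat.choose a j) * (stirling (N-j) (b-j)))
      = ∑ j ∈ Finset.Icc 1 a, (-1:ℤ)^(j-1) * (dB j) := by
    apply Finset.sum_congr rfl
    intro j _
    simp only [hdB]
    push_cast
    ring
  rw [hSA, hSB]
  -- the main numeric inequality
  have hXY := final_nat a b t N (stirling N b) (stirling (N-1) (b-1)) (stirling N a)
    (stirling (N-1) (a-1)) (Nat.choose b 2 * stirling (N-2) (a-2))
    ha3 hb2 hba hNab hSLu hSLs1 hSUu1 hSUv hta hc2
  have hc2' : Nat.choose b 2 * stirling (N-2) (a-2) ≤ b * stirling (N-1) (a-1) := by omega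
  -- put everything together over ℤ
  set SA := ∑ j ∈ Finset.Icc 1 b, (-1:ℤ)^(j-1) * (dA j) with hSAd
  set SB := ∑ j ∈ Finset.Icc 1 a, (-1:ℤ)^(j-1) * (dB j) with hSBd
  have h1z : ((dA 1 : ℤ) - dA 2) * ((stirling N b : ℤ) + t) ≤ SA * ((stirling N b : ℤ) + t) :=
    mul_le_mul_of_nonneg_right hAlow (by positivity)
  have hd21 : (dA 2 : ℤ) ≤ dA 1 := by
    rw [hdA1, hdA2]; exact_mod_cast hc2'
  have h2z : ((dA 1 : ℤ) - dA 2) * (stirling N b : ℤ)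
      ≤ ((dA 1 : ℤ) - dA 2) * ((stirling N b : ℤ) + t) := by
    apply mul_le_mul_of_nonneg_left _ (by linarith)
    have : (0:ℤ) ≤ t := by positivity
    linarith
  have h3z : SB * ((stirling N a : ℤ) + t) ≤ (dB 1 : ℤ) * ((stirling N a : ℤ) + t) :=
    mul_le_mul_of_nonneg_right hBup (by positivity)
  have h4z : (dB 1 : ℤ) * ((stirling N a : ℤ) + t) < ((dA 1 : ℤ) - dA 2) * (stirling N b : ℤ) := by
    have h := hXY
    zify [hc2'] at h
    rw [hdA1, hdA2, hdB1]
    push_cast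
    linarith
  linarith
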